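/- In F the identity x₇ = a·c'·d + d' − a·e − c'·f holds; that is, the frozen variable x₇ is the stated polynomial in the nine generators a, a', b, c, c', d, d', e, f. -/
import Mathlib


noncomputable section

/-- The field `F = Frac(ℤ[x₀,…,x₈])`. -/
abbrev F : Type := FractionRing (MvPolynomial (Fin 9) ℤ)

/-- The images of the indeterminates `x₀,…,x₈` in `F`. -/
def x (i : Fin 9) : F := algebraMap (MvPolynomial (Fin 9) ℤ) F (MvPolynomial.X i)

def a : F := x 0
def a' : F := x 4
def b : F := x 5
def c : F := (x 1 + x 0 * x 2 + x 7) / (x 0 * x 1)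
def c' : F := (x 3 + x 2 * x 4 + x 8) / (x 3 * x 4)
def f : F := (x 2 + x 1 * x 3 * x 5 + x 6) / (x 2 * x 5)
def d : F :=
  ((x 1) ^ 2 * x 3 * x 5 + (x 2 + x 6) * (x 0 * x 2 + x 7)
      + x 1 * (x 2 + x 6 + x 3 * x 5 * x 7)) / (x 0 * x 1 * x 2 * x 5)
def d' : F :=
  ((x 2) ^ 2 * x 4 + (x 1 * x 3 * x 5 + x 6) * (x 3 + x 8)
      + x 2 * (x 3 + x 4 * x 6 + x 8)) / (x 2 * x 3 * x 4 * x 5)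
def e : F :=
  ((x 1) ^ 2 * x 3 * x 5 * (x 3 + x 8)
      + (x 2 + x 6) * (x 0 * x 2 + x 7) * (x 3 + x 2 * x 4 + x 8)
      + x 1 * ((x 2) ^ 2 * x 4 + (x 6 + x 3 * x 5 * x 7) * (x 3 + x 8)
          + x 2 * (x 3 + x 4 * x 6 + x 8))) / (x 0 * x 1 * x 2 * x 3 * x 4 * x 5)


lemma x_ne (i : Fin 9) : x i ≠ 0 := by
  simp only [x, ne_eq]
  rw [map_eq_zero_iff _ (IsFractionRing.injective (MvPolynomial (Fin 9) ℤ) F)]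
  exact MvPolynomial.X_ne_zero i

set_option maxHeartbeats 1000000 in
set_option synthInstance.maxHeartbeats 400000 in
theorem stmt2 : x 7 = a * c' * d + d' - a * e - c' * f := by
  have h0 := x_ne 0; have h1 := x_ne 1; have h2 := x_ne 2
  have h3 := x_ne 3; have h4 := x_ne 4; have h5 := x_ne 5
  have hD : (x 0 * x 1 * x 2 * x 3 * x 4 * x 5 : F) ≠ 0 :=
    mul_ne_zero (mul_ne_zero (mul_ne_zero (mul_ne_zero (mul_ne_zero h0 h1) h2) h3) h4) h5
  have hc' : c' * (x 3 * x 4) = x 3 + x 2 * x 4 + x 8 := by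
    unfold c'; exact div_mul_cancel₀ _ (mul_ne_zero h3 h4)
  have hf : f * (x 2 * x 5) = x 2 + x 1 * x 3 * x 5 + x 6 := by
    unfold f; exact div_mul_cancel₀ _ (mul_ne_zero h2 h5)
  have hd : d * (x 0 * x 1 * x 2 * x 5) =
      (x 1) ^ 2 * x 3 * x 5 + (x 2 + x 6) * (x 0 * x 2 + x 7)
        + x 1 * (x 2 + x 6 + x 3 * x 5 * x 7) := by
    unfold d
    exact div_mul_cancel₀ _ (mul_ne_zero (mul_ne_zero (mul_ne_zero h0 h1) h2) h5)
  have hd' : d' * (x 2 * x 3 * x 4 * x 5) =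
      (x 2) ^ 2 * x 4 + (x 1 * x 3 * x 5 + x 6) * (x 3 + x 8)
        + x 2 * (x 3 + x 4 * x 6 + x 8) := by
    unfold d'
    exact div_mul_cancel₀ _ (mul_ne_zero (mul_ne_zero (mul_ne_zero h2 h3) h4) h5)
  have he : e * (x 0 * x 1 * x 2 * x 3 * x 4 * x 5) =
      (x 1) ^ 2 * x 3 * x 5 * (x 3 + x 8)
        + (x 2 + x 6) * (x 0 * x 2 + x 7) * (x 3 + x 2 * x 4 + x 8)
        + x 1 * ((x 2) ^ 2 * x 4 + (x 6 + x 3 * x 5 * x 7) * (x 3 + x 8)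
            + x 2 * (x 3 + x 4 * x 6 + x 8)) := by
    unfold e; exact div_mul_cancel₀ _ hD
  apply mul_left_cancel₀ hD
  have expand : x 0 * x 1 * x 2 * x 3 * x 4 * x 5 * (a * c' * d + d' - a * e - c' * f)
      = a * ((c' * (x 3 * x 4)) * (d * (x 0 * x 1 * x 2 * x 5)))
        + (x 0 * x 1) * (d' * (x 2 * x 3 * x 4 * x 5))
        - a * (e * (x 0 * x 1 * x 2 * x 3 * x 4 * x 5))
        - (x 0 * x 1) * ((c' * (x 3 * x 4)) * (f * (x 2 * x 5))) := by
    ring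
  rw [expand, hc', hf, hd, hd', he]
  unfold a
  ring
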